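/- Let Φ : [0,∞) → [0,∞) be a Young function with generalized inverse Φ⁻¹(s) := inf { r ≥ 0 : Φ(r) > s }. For every a ∈ ℝⁿ and r > 0, the characteristic function χ_{B(a,r)} of the open ball B(a,r) satisfies ‖χ_{B(a,r)}‖_{wL_Φ} = 1 / Φ⁻¹(1/|B(a,r)|), where |B(a,r)| is the Lebesgue measure of B(a,r). -/

import Mathlib

open MeasureTheory Filter Set
open scoped ENNReal

/-- A Young function: convex on `[0,∞)`, left-continuous, `Φ 0 = 0`,
`Φ t → ∞` as `t → ∞`, and taking values in `[0,∞)`. -/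
def IsYoungFunction (Φ : ℝ → ℝ) : Prop :=
  ConvexOn ℝ (Set.Ici 0) Φ ∧
  (∀ t : ℝ, 0 ≤ t → ContinuousWithinAt Φ (Set.Iic t) t) ∧
  Φ 0 = 0 ∧
  Tendsto Φ atTop atTop ∧
  ∀ t : ℝ, 0 ≤ t → 0 ≤ Φ t

/-- Generalized inverse `Φ⁻¹(s) = inf {r ≥ 0 : Φ r > s}`. -/
noncomputable def youngInv (Φ : ℝ → ℝ) (s : ℝ) : ℝ :=
  sInf {r : ℝ | 0 ≤ r ∧ s < Φ r}

/-- The weak Orlicz quasi-norm of `f` on `ℝⁿ`, valued in `ℝ≥0∞`. -/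
noncomputable def wLuxNorm {n : ℕ} (Φ : ℝ → ℝ) (f : EuclideanSpace ℝ (Fin n) → ℝ) : ℝ≥0∞ :=
  sInf (ENNReal.ofReal ''
    {b : ℝ | 0 < b ∧
      ∀ t : ℝ, 0 < t → ENNReal.ofReal (Φ t) * volume {x | t < |f x| / b} ≤ 1})

lemma young_scale {Φ : ℝ → ℝ} (hΦ : IsYoungFunction Φ) {x y : ℝ}
    (hx : 0 ≤ x) (hxy : x ≤ y) (hy : 0 < y) : Φ x ≤ (x / y) * Φ y := by
  obtain ⟨hconv, -, h0, -, -⟩ := hΦ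
  have hb : (0:ℝ) ≤ x / y := div_nonneg hx hy.le
  have hb1 : x / y ≤ 1 := (div_le_one hy).2 hxy
  have h := hconv.2 (Set.mem_Ici.2 le_rfl) (Set.mem_Ici.2 hy.le)
    (by linarith : (0:ℝ) ≤ 1 - x / y) hb (by ring)
  have hxy' : (1 - x / y) • (0:ℝ) + (x / y) • y = x := by
    rw [smul_zero, zero_add, smul_eq_mul, div_mul_cancel₀ x hy.ne']
  rw [hxy'] at h
  simpa [h0, smul_eq_mul] using h

lemma young_mono {Φ : ℝ → ℝ} (hΦ : IsYoungFunction Φ) {x y : ℝ}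
    (hx : 0 ≤ x) (hxy : x ≤ y) : Φ x ≤ Φ y := by
  rcases eq_or_lt_of_le (hx.trans hxy) with hy | hy
  · have : x = y := le_antisymm hxy (hy ▸ hx)
    simp [this]
  · calc Φ x ≤ (x / y) * Φ y := young_scale hΦ hx hxy hy
    _ ≤ 1 * Φ y := by
        have := hΦ.2.2.2.2 y (hx.trans hxy)
        have h1 : x / y ≤ 1 := (div_le_one hy).2 hxy
        exact mul_le_mul_of_nonneg_right h1 this
    _ = Φ y := one_mul _

/-- Left-continuity: if `Φ t > s` with `t > 0`, some earlier point already exceeds `s`. -/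
lemma young_left {Φ : ℝ → ℝ} (hΦ : IsYoungFunction Φ) {t s : ℝ}
    (ht : 0 < t) (h : s < Φ t) : ∃ t', 0 ≤ t' ∧ t' < t ∧ s < Φ t' := by
  have hc : Tendsto Φ (nhdsWithin t (Set.Iic t)) (nhds (Φ t)) := hΦ.2.1 t ht.le
  have hmem : Φ ⁻¹' Set.Ioi s ∈ nhdsWithin t (Set.Iic t) := hc (Ioi_mem_nhds h)
  rw [mem_nhdsLE_iff_exists_Ioc_subset] at hmem
  obtain ⟨u, hu, hsub⟩ := hmem
  have hu' : u < t := hu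
  refine ⟨max ((u + t) / 2) 0, le_max_right _ _, ?_, ?_⟩
  · exact max_lt (by linarith) ht
  · have hmem2 : max ((u + t) / 2) 0 ∈ Set.Ioc u t := by
      constructor
      · rcases le_total 0 ((u + t) / 2) with h' | h'
        · rw [max_eq_left h']; linarith
        · rw [max_eq_right h']
          by_contra h''
          push_neg at h''
          linarith
      · exact max_le (by linarith) ht.le
    exact hsub hmem2

lemma young_key {Φ : ℝ → ℝ} (hΦ : IsYoungFunction Φ) {s : ℝ} (hs : 0 < s)
    {x : ℝ} (hx : 0 ≤ x) : Φ x ≤ s ↔ x ≤ youngInv Φ s := by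
  have hne : {r : ℝ | 0 ≤ r ∧ s < Φ r}.Nonempty := by
    obtain ⟨r, hr⟩ := ((hΦ.2.2.2.1.eventually_gt_atTop s).and (eventually_ge_atTop 0)).exists
    exact ⟨r, hr.2, hr.1⟩
  have hbdd : BddBelow {r : ℝ | 0 ≤ r ∧ s < Φ r} := ⟨0, fun r hr => hr.1⟩
  constructor
  · intro h
    refine le_csInf hne fun r hr => ?_
    by_contra hlt
    push_neg at hlt
    exact absurd (young_mono hΦ hr.1 hlt.le) (by linarith [hr.2])
  · intro h
    by_contra hgt
    push_neg at hgt
    have hmem : x ∈ {r : ℝ | 0 ≤ r ∧ s < Φ r} := ⟨hx, hgt⟩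
    have hle : youngInv Φ s ≤ x := csInf_le hbdd hmem
    have hxc : x = youngInv Φ s := le_antisymm h hle
    have hx0 : 0 < x := by
      rcases hx.lt_or_eq with h' | h'
      · exact h'
      · exfalso; rw [← h', hΦ.2.2.1] at hgt; linarith
    obtain ⟨t', ht0, ht1, ht2⟩ := young_left hΦ hx0 hgt
    have : youngInv Φ s ≤ t' := csInf_le hbdd ⟨ht0, ht2⟩
    linarith [hxc ▸ ht1]

lemma young_inv_pos {Φ : ℝ → ℝ} (hΦ : IsYoungFunction Φ) {s : ℝ} (hs : 0 < s) :
    0 < youngInv Φ s := by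
  rcases le_or_gt (Φ 1) s with h1 | h1
  · have := (young_key hΦ hs (by norm_num : (0:ℝ) ≤ 1)).1 h1
    linarith
  · have hΦ1 : 0 < Φ 1 := hs.trans h1
    set x := s / Φ 1 with hxdef
    have hx0 : 0 < x := div_pos hs hΦ1
    have hx1 : x ≤ 1 := (div_le_one hΦ1).2 h1.le
    have hxs : Φ x ≤ s := by
      have h2 := young_scale hΦ hx0.le hx1 one_pos
      rw [div_one] at h2
      have h3 : x * Φ 1 = s := div_mul_cancel₀ s hΦ1.ne'
      linarith
    have := (young_key hΦ hs hx0.le).1 hxs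
    linarith

theorem wLuxNorm_indicator_ball {n : ℕ} (hn : 0 < n) (Φ : ℝ → ℝ)
    (hΦ : IsYoungFunction Φ) (a : EuclideanSpace ℝ (Fin n)) (r : ℝ) (hr : 0 < r) :
    wLuxNorm Φ ((Metric.ball a r).indicator fun _ => (1 : ℝ)) =
      ENNReal.ofReal (1 / youngInv Φ (1 / (volume (Metric.ball a r)).toReal)) := by
  set V := volume (Metric.ball a r) with hVdef
  have hV0 : V ≠ 0 := (Metric.measure_ball_pos volume a hr).ne'
  have hVt : V ≠ ⊤ := measure_ball_lt_top.ne
  have hVr : 0 < V.toReal := ENNReal.toReal_pos hV0 hVt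
  set s := 1 / V.toReal with hsdef
  have hs0 : 0 < s := by positivity
  set c := youngInv Φ s with hcdef
  have hc0 : 0 < c := young_inv_pos hΦ hs0
  have hofs : ENNReal.ofReal s = V⁻¹ := by
    rw [hsdef, one_div, ENNReal.ofReal_inv_of_pos hVr, ENNReal.ofReal_toReal hVt]
  have habs : ∀ x : EuclideanSpace ℝ (Fin n),
      |(Metric.ball a r).indicator (fun _ => (1:ℝ)) x| ≤ 1 := by
    intro x
    by_cases hx : x ∈ Metric.ball a r <;> simp [Set.indicator_apply, hx]
  have hball : ∀ t b : ℝ, 0 < t → 0 < b → t < 1 / b →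
      {x | t < |(Metric.ball a r).indicator (fun _ => (1:ℝ)) x| / b} = Metric.ball a r := by
    intro t b ht hb htb
    rw [one_div] at htb
    ext x
    by_cases hx : x ∈ Metric.ball a r
    · simp [Set.indicator_apply, hx, htb]
    · simp [Set.indicator_apply, hx, ht.not_gt, hb.ne']
  have hempty : ∀ t b : ℝ, 0 < b → 1 / b ≤ t →
      {x | t < |(Metric.ball a r).indicator (fun _ => (1:ℝ)) x| / b}
        = (∅ : Set (EuclideanSpace ℝ (Fin n))) := by
    intro t b hb htb
    ext x
    simp only [Set.mem_setOf_eq, Set.mem_empty_iff_false, iff_false, not_lt]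
    calc |(Metric.ball a r).indicator (fun _ => (1:ℝ)) x| / b ≤ 1 / b := by
          gcongr; exact habs x
      _ ≤ t := htb
  have hcond : ∀ t : ℝ, ENNReal.ofReal (Φ t) * V ≤ 1 ↔ ENNReal.ofReal (Φ t) ≤ ENNReal.ofReal s := by
    intro t
    rw [hofs, ← ENNReal.le_div_iff_mul_le (Or.inl hV0) (Or.inl hVt), one_div]
  have hset : {b : ℝ | 0 < b ∧ ∀ t : ℝ, 0 < t → ENNReal.ofReal (Φ t) *
        volume {x | t < |(Metric.ball a r).indicator (fun _ => (1:ℝ)) x| / b} ≤ 1}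
      = Set.Ici (1 / c) := by
    ext b
    simp only [Set.mem_setOf_eq, Set.mem_Ici]
    constructor
    · rintro ⟨hb, h⟩
      rw [one_div_le hc0 hb]
      by_contra hcb
      push_neg at hcb
      set t := (c + 1 / b) / 2 with htdef
      have ht0 : 0 < t := by positivity
      have htb : t < 1 / b := by rw [htdef]; linarith
      have htc : c < t := by rw [htdef]; linarith
      have hh := h t ht0
      rw [hball t b ht0 hb htb, ← hVdef, hcond t,
        ENNReal.ofReal_le_ofReal_iff hs0.le] at hh
      have := (young_key hΦ hs0 ht0.le).1 hh
      linarith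
    · intro hb'
      have hb : 0 < b := lt_of_lt_of_le (by positivity) hb'
      refine ⟨hb, fun t ht => ?_⟩
      rcases lt_or_ge t (1 / b) with htb | htb
      · rw [hball t b ht hb htb, ← hVdef, hcond t,
          ENNReal.ofReal_le_ofReal_iff hs0.le]
        have h1 : 1 / b ≤ c := (one_div_le hc0 hb).1 hb'
        exact (young_key hΦ hs0 ht.le).2 (by linarith)
      · rw [hempty t b hb htb]
        simp
  rw [wLuxNorm, hset]
  apply le_antisymm
  · exact sInf_le ⟨1 / c, Set.self_mem_Ici, rfl⟩
  · refine le_sInf ?_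
    rintro _ ⟨b, hb, rfl⟩
    exact ENNReal.ofReal_le_ofReal hb
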